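/- arXiv:1701.05179 — 2 statements merged into one kernel-verified Lean document; each statement's English description precedes it below -/
import Mathlib

section
/- Let P be super-uniform with P[P ≤ τ] > 0, independent of (k, W, indicator events) conditionally structured as in IHWc, with W ≥ 0 and k a positive-integer random variable. Then E[ 1{P ≤ (αWk/m) ∧ τ} / (k ∨ 1) | P ≤ τ, W, k ] ≤ αW / (m·P[P ≤ τ]). -/
open MeasureTheory ProbabilityTheory ENNReal

lemma lintegral_indep_factor {Ω : Type*} [mΩ : MeasurableSpace Ω] (μ : Measure Ω)
    [IsProbabilityMeasure μ] {P : Ω → ℝ} {Y : Ω → ℝ × ℕ}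
    (hP : Measurable P) (hY : Measurable Y) (hindep : IndepFun P Y μ)
    {F : ℝ × (ℝ × ℕ) → ℝ≥0∞} (hF : Measurable F) :
    ∫⁻ ω, F (P ω, Y ω) ∂μ = ∫⁻ y, ∫⁻ p, F (p, y) ∂(μ.map P) ∂(μ.map Y) := by
  have hmap : μ.map (fun ω => (P ω, Y ω)) = (μ.map P).prod (μ.map Y) :=
    (indepFun_iff_map_prod_eq_prod_map_map hP.aemeasurable hY.aemeasurable).mp hindep
  haveI : IsProbabilityMeasure (μ.map P) := Measure.isProbabilityMeasure_map hP.aemeasurable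
  rw [← lintegral_map hF (hP.prodMk hY), hmap, lintegral_prod_symm' _ hF]

/-- **Key conditional bound in the IHWc proof.**
Let `P` be super-uniform with `P[P ≤ τ] > 0`, independent of the pair `(W, k)` (which is
a function of data independent of `P`), where `W ≥ 0` and `k ≥ 1` is an integer random
variable. Then, conditionally on the event `{P ≤ τ}` and on `(W, k)`,
`E[ 1{P ≤ (αWk/m) ∧ τ} / (k ∨ 1) | P ≤ τ, W, k ] ≤ αW / (m·P[P ≤ τ])`. -/
theorem ihwc_conditional_bound
    {Ω : Type*} [mΩ : MeasurableSpace Ω] (μ : Measure Ω) [IsProbabilityMeasure μ]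
    (P W : Ω → ℝ) (k : Ω → ℕ)
    (hPmeas : Measurable P) (hWmeas : Measurable W) (hkmeas : Measurable k)
    (hsuper : ∀ t ∈ Set.Icc (0 : ℝ) 1, μ {ω | P ω ≤ t} ≤ ENNReal.ofReal t)
    (hindep : IndepFun P (fun ω => (W ω, k ω)) μ)
    (hWnonneg : ∀ ω, 0 ≤ W ω) (hk : ∀ ω, 1 ≤ k ω)
    (m : ℕ) (hm : 0 < m)
    (α τ : ℝ) (hα : α ∈ Set.Ioo (0 : ℝ) 1) (hτ : τ ∈ Set.Ioo (0 : ℝ) 1)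
    (hpos : 0 < μ {ω | P ω ≤ τ}) :
    MeasureTheory.condExp
        (MeasurableSpace.comap (fun ω => (W ω, k ω)) inferInstance)
        (ProbabilityTheory.cond μ {ω | P ω ≤ τ})
        (fun ω => (if P ω ≤ min (α * W ω * k ω / m) τ then (1 : ℝ) else 0)
          / (max (k ω) 1 : ℕ))
      ≤ᵐ[ProbabilityTheory.cond μ {ω | P ω ≤ τ}]
        fun ω => α * W ω / (m * (μ {ω' | P ω' ≤ τ}).toReal) := by
  classical
  set Y : Ω → ℝ × ℕ := fun ω => (W ω, k ω) with hY_def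
  have hYmeas : Measurable Y := hWmeas.prodMk hkmeas
  set s : Set Ω := {ω | P ω ≤ τ} with hs_def
  have ms : MeasurableSet s := hPmeas measurableSet_Iic
  set c : ℝ := (μ s).toReal with hc_def
  have hμs_ne : μ s ≠ 0 := hpos.ne'
  have hμs_fin : μ s ≠ ∞ := measure_ne_top μ s
  have hc_pos : 0 < c := ENNReal.toReal_pos hμs_ne hμs_fin
  set ν : Measure Ω := μ[|s] with hν_def
  haveI hνprob : IsProbabilityMeasure ν := cond_isProbabilityMeasure hμs_ne
  set f : Ω → ℝ := fun ω =>
    (if P ω ≤ min (α * W ω * k ω / m) τ then (1 : ℝ) else 0) / (max (k ω) 1 : ℕ) with hf_def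
  set g : Ω → ℝ := fun ω => α * W ω / (m * c) with hg_def
  have hm_pos : (0:ℝ) < m := by exact_mod_cast hm
  -- measurability of f
  have hkR : Measurable fun ω => (k ω : ℝ) := (measurable_from_top (f := (Nat.cast : ℕ → ℝ))).comp hkmeas
  have hcond : MeasurableSet {ω | P ω ≤ min (α * W ω * k ω / m) τ} :=
    measurableSet_le hPmeas ((((measurable_const.mul hWmeas).mul hkR).div_const _).min measurable_const)
  have hfmeas : Measurable f := by
    apply Measurable.div
    · exact Measurable.ite hcond measurable_const measurable_const
    · exact measurable_from_top.comp (hkmeas.max measurable_const)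
  -- f is nonneg and bounded by 1
  have hf_nonneg : ∀ ω, 0 ≤ f ω := by
    intro ω
    apply div_nonneg
    · split <;> norm_num
    · positivity
  have hf_le_one : ∀ ω, f ω ≤ 1 := by
    intro ω
    have h1 : (1:ℝ) ≤ ((max (k ω) 1 : ℕ) : ℝ) := by exact_mod_cast Nat.le_max_right (k ω) 1
    rw [hf_def, div_le_one (by linarith)]
    split <;> linarith
  have hf_int : Integrable f ν := by
    refine (integrable_const (1:ℝ)).mono' (hfmeas.aestronglyMeasurable) ?_
    refine Filter.Eventually.of_forall fun ω => ?_
    rw [Real.norm_eq_abs, abs_of_nonneg (hf_nonneg ω)]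
    exact hf_le_one ω
  -- f vanishes off s
  have hf_zero : ∀ ω, ω ∉ s → f ω = 0 := by
    intro ω hω
    have : ¬ P ω ≤ min (α * W ω * k ω / m) τ := fun h => hω (le_trans h (min_le_right _ _))
    show (if P ω ≤ min (α * W ω * k ω / m) τ then (1:ℝ) else 0) / (max (k ω) 1 : ℕ) = 0
    rw [if_neg this, zero_div]
  -- a.e. properties of the law of Y
  have hsetWk : MeasurableSet {y : ℝ × ℕ | 0 ≤ y.1 ∧ 1 ≤ y.2} :=
    (measurableSet_le measurable_const measurable_fst).inter
      (measurableSet_le measurable_const measurable_snd)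
  have hae : ∀ᵐ y ∂(μ.map Y), 0 ≤ y.1 ∧ 1 ≤ y.2 := by
    rw [MeasureTheory.ae_map_iff hYmeas.aemeasurable hsetWk]
    exact Filter.Eventually.of_forall fun ω => ⟨hWnonneg ω, hk ω⟩
  -- Fact 1: the key superuniformity bound
  have fact1 : ∀ B : Set (ℝ × ℕ), MeasurableSet B →
      ∫⁻ ω in Y ⁻¹' B, ENNReal.ofReal (f ω) ∂μ
        ≤ ∫⁻ ω in Y ⁻¹' B, ENNReal.ofReal (α * W ω / m) ∂μ := by
    intro B hB
    set F₁ : ℝ × (ℝ × ℕ) → ℝ≥0∞ := fun z =>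
      B.indicator (fun _ => 1) z.2 *
        ENNReal.ofReal ((if z.1 ≤ min (α * z.2.1 * z.2.2 / m) τ then (1:ℝ) else 0)
          / (max z.2.2 1 : ℕ)) with hF₁_def
    have hcastmeas : Measurable fun z : ℝ × (ℝ × ℕ) => ((max z.2.2 1 : ℕ) : ℝ) :=
      (measurable_from_top (f := (Nat.cast : ℕ → ℝ))).comp
        ((measurable_snd.comp measurable_snd).max measurable_const)
    have hF₁meas : Measurable F₁ := by
      refine Measurable.mul ((measurable_const.indicator hB).comp measurable_snd) ?_
      refine ENNReal.measurable_ofReal.comp (Measurable.div ?_ hcastmeas)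
      refine Measurable.ite ?_ measurable_const measurable_const
      exact measurableSet_le measurable_fst
        ((((measurable_const.mul (measurable_fst.comp measurable_snd)).mul
          ((measurable_from_top (f := (Nat.cast : ℕ → ℝ))).comp
            (measurable_snd.comp measurable_snd))).div_const _).min measurable_const)
    have hL : ∫⁻ ω in Y ⁻¹' B, ENNReal.ofReal (f ω) ∂μ = ∫⁻ ω, F₁ (P ω, Y ω) ∂μ := by
      rw [← lintegral_indicator (hYmeas hB)]
      refine lintegral_congr fun ω => ?_
      by_cases hy : Y ω ∈ B
      · simp only [hF₁_def, Set.indicator_apply, Set.mem_preimage, hy, if_true]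
        rw [one_mul]
      · simp only [hF₁_def, Set.indicator_apply, Set.mem_preimage, hy, if_false, zero_mul]
    have hRmeas : Measurable fun y : ℝ × ℕ =>
        B.indicator (fun _ => (1:ℝ≥0∞)) y * ENNReal.ofReal (α * y.1 / m) :=
      (measurable_const.indicator hB).mul
        (ENNReal.measurable_ofReal.comp ((measurable_const.mul measurable_fst).div_const _))
    have hbound : ∀ᵐ y ∂(μ.map Y), (∫⁻ p, F₁ (p, y) ∂(μ.map P))
        ≤ B.indicator (fun _ => (1:ℝ≥0∞)) y * ENNReal.ofReal (α * y.1 / m) := by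
      filter_upwards [hae] with y hy
      obtain ⟨hy1, hy2⟩ := hy
      have hy2R : (1:ℝ) ≤ (y.2 : ℝ) := by exact_mod_cast hy2
      have ht01 : min (α * y.1 * y.2 / m) τ ∈ Set.Icc (0:ℝ) 1 := by
        constructor
        · apply le_min
          · exact div_nonneg (mul_nonneg (mul_nonneg hα.1.le hy1) (Nat.cast_nonneg _)) hm_pos.le
          · exact hτ.1.le
        · exact (min_le_right _ _).trans hτ.2.le
      have hjcast : ((max y.2 1 : ℕ) : ℝ) = (y.2 : ℝ) := by
        rw [max_eq_left hy2]
      have hinner : (fun p : ℝ => ENNReal.ofReal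
            ((if p ≤ min (α * y.1 * y.2 / m) τ then (1:ℝ) else 0) / (max y.2 1 : ℕ)))
          = (Set.Iic (min (α * y.1 * y.2 / m) τ)).indicator
              (fun _ => ENNReal.ofReal ((1:ℝ) / (max y.2 1 : ℕ))) := by
        funext p
        simp only [Set.indicator_apply, Set.mem_Iic]
        by_cases hp : p ≤ min (α * y.1 * y.2 / m) τ
        · rw [if_pos hp, if_pos hp]
        · rw [if_neg hp, if_neg hp, zero_div, ENNReal.ofReal_zero]
      have hcalc : ∫⁻ p, F₁ (p, y) ∂(μ.map P)
          = B.indicator (fun _ => (1:ℝ≥0∞)) y *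
            (ENNReal.ofReal ((1:ℝ) / (max y.2 1 : ℕ)) *
              μ {ω | P ω ≤ min (α * y.1 * y.2 / m) τ}) := by
        simp only [hF₁_def]
        rw [lintegral_const_mul _ (by
          refine ENNReal.measurable_ofReal.comp (Measurable.div ?_ measurable_const)
          exact Measurable.ite (measurableSet_le measurable_id measurable_const)
            measurable_const measurable_const)]
        congr 1
        rw [hinner, lintegral_indicator measurableSet_Iic, setLIntegral_const,
          Measure.map_apply hPmeas measurableSet_Iic]
        rfl
      rw [hcalc]
      refine mul_le_mul_right ?_ _
      have h1 : μ {ω | P ω ≤ min (α * y.1 * y.2 / m) τ} ≤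
          ENNReal.ofReal (min (α * y.1 * y.2 / m) τ) := hsuper _ ht01
      calc ENNReal.ofReal ((1:ℝ) / (max y.2 1 : ℕ)) * μ {ω | P ω ≤ min (α * y.1 * y.2 / m) τ}
          ≤ ENNReal.ofReal ((1:ℝ) / (max y.2 1 : ℕ)) *
              ENNReal.ofReal (min (α * y.1 * y.2 / m) τ) := mul_le_mul_right h1 _
        _ = ENNReal.ofReal ((1:ℝ) / (max y.2 1 : ℕ) * min (α * y.1 * y.2 / m) τ) :=
            (ENNReal.ofReal_mul (by positivity)).symm
        _ ≤ ENNReal.ofReal (α * y.1 / m) := by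
            apply ENNReal.ofReal_le_ofReal
            rw [hjcast]
            have h2 : min (α * y.1 * y.2 / m) τ ≤ α * y.1 * y.2 / m := min_le_left _ _
            have hy2pos : (0:ℝ) < (y.2:ℝ) := lt_of_lt_of_le one_pos hy2R
            rw [one_div, inv_mul_le_iff₀ hy2pos]
            calc min (α * y.1 * y.2 / m) τ ≤ α * y.1 * y.2 / m := h2
              _ = (y.2:ℝ) * (α * y.1 / m) := by ring
      done
    calc ∫⁻ ω in Y ⁻¹' B, ENNReal.ofReal (f ω) ∂μ
        = ∫⁻ y, ∫⁻ p, F₁ (p, y) ∂(μ.map P) ∂(μ.map Y) := by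
          rw [hL, lintegral_indep_factor μ hPmeas hYmeas hindep hF₁meas]
      _ ≤ ∫⁻ y, B.indicator (fun _ => (1:ℝ≥0∞)) y * ENNReal.ofReal (α * y.1 / m) ∂(μ.map Y) :=
          lintegral_mono_ae hbound
      _ = ∫⁻ ω, B.indicator (fun _ => (1:ℝ≥0∞)) (Y ω) * ENNReal.ofReal (α * W ω / m) ∂μ := by
          rw [lintegral_map hRmeas hYmeas]
      _ = ∫⁻ ω in Y ⁻¹' B, ENNReal.ofReal (α * W ω / m) ∂μ := by
          rw [← lintegral_indicator (hYmeas hB)]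
          refine lintegral_congr fun ω => ?_
          by_cases hy : Y ω ∈ B
          · simp only [Set.indicator_apply, Set.mem_preimage, hy, if_true, one_mul]
          · simp only [Set.indicator_apply, Set.mem_preimage, hy, if_false, zero_mul]
  -- Fact 2: independence of {P ≤ τ} from Y, in weighted form
  have fact2 : ∀ B : Set (ℝ × ℕ), MeasurableSet B →
      ∫⁻ ω in (Y ⁻¹' B) ∩ s, ENNReal.ofReal (W ω) ∂μ
        = μ s * ∫⁻ ω in Y ⁻¹' B, ENNReal.ofReal (W ω) ∂μ := by
    intro B hB
    set F₃ : ℝ × (ℝ × ℕ) → ℝ≥0∞ := fun z =>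
      (Set.Iic τ).indicator (fun _ => 1) z.1 *
        (B.indicator (fun _ => 1) z.2 * ENNReal.ofReal z.2.1) with hF₃_def
    have hCmeas : Measurable fun y : ℝ × ℕ =>
        B.indicator (fun _ => (1:ℝ≥0∞)) y * ENNReal.ofReal y.1 :=
      (measurable_const.indicator hB).mul (ENNReal.measurable_ofReal.comp measurable_fst)
    have hF₃meas : Measurable F₃ :=
      ((measurable_const.indicator measurableSet_Iic).comp measurable_fst).mul
        (hCmeas.comp measurable_snd)
    have hL : ∫⁻ ω in (Y ⁻¹' B) ∩ s, ENNReal.ofReal (W ω) ∂μ = ∫⁻ ω, F₃ (P ω, Y ω) ∂μ := by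
      rw [← lintegral_indicator ((hYmeas hB).inter ms)]
      refine lintegral_congr fun ω => ?_
      by_cases hy : Y ω ∈ B <;> by_cases hp : P ω ≤ τ <;>
        simp [hF₃_def, Set.indicator_apply, Set.mem_Iic, hy, hp, Set.mem_preimage,
          Set.mem_inter_iff, hs_def, Set.mem_setOf_eq] <;> rfl
    rw [hL, lintegral_indep_factor μ hPmeas hYmeas hindep hF₃meas]
    have hinner : ∀ y : ℝ × ℕ, ∫⁻ p, F₃ (p, y) ∂(μ.map P)
        = μ s * (B.indicator (fun _ => (1:ℝ≥0∞)) y * ENNReal.ofReal y.1) := by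
      intro y
      simp only [hF₃_def]
      rw [lintegral_mul_const _ (measurable_const.indicator measurableSet_Iic)]
      congr 1
      rw [lintegral_indicator measurableSet_Iic, setLIntegral_const, one_mul,
        Measure.map_apply hPmeas measurableSet_Iic]
      rfl
    calc ∫⁻ y, ∫⁻ p, F₃ (p, y) ∂(μ.map P) ∂(μ.map Y)
        = ∫⁻ y, μ s * (B.indicator (fun _ => (1:ℝ≥0∞)) y * ENNReal.ofReal y.1) ∂(μ.map Y) :=
          lintegral_congr hinner
      _ = μ s * ∫⁻ y, B.indicator (fun _ => (1:ℝ≥0∞)) y * ENNReal.ofReal y.1 ∂(μ.map Y) :=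
          lintegral_const_mul _ hCmeas
      _ = μ s * ∫⁻ ω in Y ⁻¹' B, ENNReal.ofReal (W ω) ∂μ := by
          congr 1
          rw [lintegral_map hCmeas hYmeas, ← lintegral_indicator (hYmeas hB)]
          refine lintegral_congr fun ω => ?_
          by_cases hy : Y ω ∈ B <;>
            simp [Set.indicator_apply, Set.mem_preimage, hy] <;> rfl
  -- the comap σ-algebra
  have hm'le : MeasurableSpace.comap Y inferInstance ≤ mΩ := hYmeas.comap_le
  haveI hsf : SigmaFinite (ν.trim hm'le) := by infer_instance
  -- key: conditional-expectation defining inequality on comap-measurable sets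
  have key : ∀ (B : Set (ℝ × ℕ)), MeasurableSet B → ∀ n : ℕ, (∀ ω ∈ Y ⁻¹' B, W ω ≤ n) →
      ∫ ω in Y ⁻¹' B, (MeasureTheory.condExp (MeasurableSpace.comap Y inferInstance) ν f) ω ∂ν
        ≤ ∫ ω in Y ⁻¹' B, g ω ∂ν := by
    intro B hB n hWn
    have hA : MeasurableSet (Y ⁻¹' B) := hYmeas hB
    have hA' : MeasurableSet[MeasurableSpace.comap Y inferInstance] (Y ⁻¹' B) := ⟨B, hB, rfl⟩
    -- restricting ν to a set
    have hres : ∀ (A : Set Ω), MeasurableSet A → ∀ F : Ω → ℝ,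
        ∫⁻ ω in A, ENNReal.ofReal (F ω) ∂ν
          = (μ s)⁻¹ * ∫⁻ ω in A ∩ s, ENNReal.ofReal (F ω) ∂μ := by
      intro A hAm F
      rw [hν_def, ProbabilityTheory.cond, Measure.restrict_smul, lintegral_smul_measure,
        Measure.restrict_restrict hAm, smul_eq_mul]
    -- LHS lintegral
    have hLf : ∫⁻ ω in Y ⁻¹' B, ENNReal.ofReal (f ω) ∂ν
        = (μ s)⁻¹ * ∫⁻ ω in Y ⁻¹' B, ENNReal.ofReal (f ω) ∂μ := by
      rw [hres _ hA f]
      congr 1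
      rw [← lintegral_indicator hA, ← lintegral_indicator (hA.inter ms)]
      refine lintegral_congr fun ω => ?_
      by_cases hy : ω ∈ Y ⁻¹' B <;> by_cases hp : ω ∈ s <;>
        simp [Set.indicator_apply, Set.mem_inter_iff, hy, hp, hf_zero ω]
    -- RHS lintegral
    have hmc : (0:ℝ) < (m:ℝ) * c := mul_pos hm_pos hc_pos
    have hαmc : (0:ℝ) ≤ α / (m * c) := div_nonneg hα.1.le hmc.le
    have hconst : ENNReal.ofReal (α / (m * c)) * μ s = ENNReal.ofReal (α / m) := by
      rw [← ENNReal.ofReal_toReal hμs_fin, ← hc_def,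
        ← ENNReal.ofReal_mul hαmc]
      congr 1
      field_simp
    have hLg : ∫⁻ ω in Y ⁻¹' B, ENNReal.ofReal (g ω) ∂ν
        = (μ s)⁻¹ * (ENNReal.ofReal (α / m) * ∫⁻ ω in Y ⁻¹' B, ENNReal.ofReal (W ω) ∂μ) := by
      rw [hres _ hA g]
      congr 1
      have hgW : ∀ ω, ENNReal.ofReal (g ω)
          = ENNReal.ofReal (α / (m * c)) * ENNReal.ofReal (W ω) := by
        intro ω
        rw [← ENNReal.ofReal_mul hαmc]
        congr 1
        rw [hg_def]
        ring
      calc ∫⁻ ω in (Y ⁻¹' B) ∩ s, ENNReal.ofReal (g ω) ∂μ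
          = ∫⁻ ω in (Y ⁻¹' B) ∩ s, ENNReal.ofReal (α / (m * c)) * ENNReal.ofReal (W ω) ∂μ := by
            exact lintegral_congr fun ω => hgW ω
        _ = ENNReal.ofReal (α / (m * c)) * ∫⁻ ω in (Y ⁻¹' B) ∩ s, ENNReal.ofReal (W ω) ∂μ := by
            rw [lintegral_const_mul _ hWmeas.ennreal_ofReal]
        _ = ENNReal.ofReal (α / (m * c)) * (μ s * ∫⁻ ω in Y ⁻¹' B, ENNReal.ofReal (W ω) ∂μ) := by
            rw [fact2 B hB]
        _ = ENNReal.ofReal (α / m) * ∫⁻ ω in Y ⁻¹' B, ENNReal.ofReal (W ω) ∂μ := by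
            rw [← mul_assoc, mul_comm (ENNReal.ofReal (α / (m * c))) (μ s), mul_comm (μ s), hconst]
    -- middle bound
    have hmid : ∫⁻ ω in Y ⁻¹' B, ENNReal.ofReal (f ω) ∂μ
        ≤ ENNReal.ofReal (α / m) * ∫⁻ ω in Y ⁻¹' B, ENNReal.ofReal (W ω) ∂μ := by
      refine (fact1 B hB).trans_eq ?_
      have : ∀ ω, ENNReal.ofReal (α * W ω / m)
          = ENNReal.ofReal (α / m) * ENNReal.ofReal (W ω) := by
        intro ω
        rw [← ENNReal.ofReal_mul (div_nonneg hα.1.le hm_pos.le)]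
        congr 1
        ring
      rw [lintegral_congr fun ω => this ω,
        lintegral_const_mul _ hWmeas.ennreal_ofReal]
    have hle : ∫⁻ ω in Y ⁻¹' B, ENNReal.ofReal (f ω) ∂ν
        ≤ ∫⁻ ω in Y ⁻¹' B, ENNReal.ofReal (g ω) ∂ν := by
      rw [hLf, hLg]
      exact mul_le_mul_right hmid _
    -- finiteness of the RHS
    have hfin : ∫⁻ ω in Y ⁻¹' B, ENNReal.ofReal (g ω) ∂ν ≠ ∞ := by
      have hb : ∫⁻ ω in Y ⁻¹' B, ENNReal.ofReal (g ω) ∂ν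
          ≤ ENNReal.ofReal (α * n / (m * c)) * ν (Y ⁻¹' B) := by
        rw [← setLIntegral_const]
        refine setLIntegral_mono' hA fun ω hω => ?_
        apply ENNReal.ofReal_le_ofReal
        rw [hg_def]
        exact (div_le_div_iff_of_pos_right hmc).mpr (mul_le_mul_of_nonneg_left (hWn ω hω) hα.1.le)
      refine ne_of_lt (lt_of_le_of_lt hb ?_)
      exact ENNReal.mul_lt_top ENNReal.ofReal_lt_top (measure_lt_top ν _)
    have hgmeas : Measurable g := (measurable_const.mul hWmeas).div_const _
    have hnonneg_f : 0 ≤ᵐ[ν.restrict (Y ⁻¹' B)] f := Filter.Eventually.of_forall hf_nonneg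
    have hnonneg_g : 0 ≤ᵐ[ν.restrict (Y ⁻¹' B)] g := Filter.Eventually.of_forall fun ω =>
      div_nonneg (mul_nonneg hα.1.le (hWnonneg ω)) hmc.le
    rw [setIntegral_condExp hm'le hf_int hA',
      integral_eq_lintegral_of_nonneg_ae hnonneg_f hfmeas.aestronglyMeasurable,
      integral_eq_lintegral_of_nonneg_ae hnonneg_g hgmeas.aestronglyMeasurable]
    exact ENNReal.toReal_mono hfin hle
  -- the conditional expectation and σ(Y)-measurable comparisons
  set h : Ω → ℝ := MeasureTheory.condExp (MeasurableSpace.comap Y inferInstance) ν f with hh_def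
  have hhsm : StronglyMeasurable[MeasurableSpace.comap Y inferInstance] h :=
    stronglyMeasurable_condExp
  have hYm' : Measurable[MeasurableSpace.comap Y inferInstance] Y :=
    (Measurable.of_comap_le le_rfl : @Measurable Ω (ℝ × ℕ) (MeasurableSpace.comap Y inferInstance) _ Y)
  have hgm' : Measurable[MeasurableSpace.comap Y inferInstance] g := by
    have hφ : Measurable fun y : ℝ × ℕ => α * y.1 / (m * c) :=
      (measurable_const.mul measurable_fst).div_const _
    exact hφ.comp hYm'
  have hWm' : Measurable[MeasurableSpace.comap Y inferInstance] W :=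
    (measurable_fst.comp hYm' : _)
  set T : Set Ω := {ω | g ω < h ω} with hT_def
  set E : ℕ → Set Ω := fun n => T ∩ {ω | W ω ≤ n} with hE_def
  have hE' : ∀ n, MeasurableSet[MeasurableSpace.comap Y inferInstance] (E n) := fun n =>
    (measurableSet_lt hgm' hhsm.measurable).inter (measurableSet_le hWm' measurable_const)
  have hEmeas : ∀ n, MeasurableSet (E n) := fun n => hm'le _ (hE' n)
  have hgmeas : Measurable g := (measurable_const.mul hWmeas).div_const _
  have hE0 : ∀ n, ν (E n) = 0 := by
    intro n
    obtain ⟨B, hB, hBE⟩ := hE' n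
    have hWn : ∀ ω ∈ Y ⁻¹' B, W ω ≤ n := by
      intro ω hω
      rw [hBE] at hω
      exact hω.2
    have hkey := key B hB n hWn
    rw [hBE] at hkey
    -- integrability on E n
    have hint_h : IntegrableOn h (E n) ν := integrable_condExp.integrableOn
    have hint_g : IntegrableOn g (E n) ν := by
      refine Integrable.mono' (integrable_const (α * n / (m * c)))
        hgmeas.aestronglyMeasurable.restrict ?_
      filter_upwards [ae_restrict_mem (hEmeas n)] with ω hω
      rw [Real.norm_eq_abs, abs_of_nonneg (div_nonneg (mul_nonneg hα.1.le (hWnonneg ω))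
        (mul_nonneg hm_pos.le hc_pos.le))]
      exact (div_le_div_iff_of_pos_right (mul_pos hm_pos hc_pos)).mpr
        (mul_le_mul_of_nonneg_left hω.2 hα.1.le)
    by_contra hne
    have hposEn : 0 < ν (E n) := zero_lt_iff.mpr hne
    have hlt : 0 < ∫ ω in E n, (h ω - g ω) ∂ν := by
      refine (setIntegral_pos_iff_support_of_nonneg_ae ?_ (hint_h.sub hint_g)).mpr ?_
      · filter_upwards [ae_restrict_mem (hEmeas n)] with ω hω
        exact sub_nonneg.mpr hω.1.le
      · refine lt_of_lt_of_le hposEn (measure_mono fun ω hω => ?_)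
        exact ⟨sub_ne_zero.mpr (ne_of_gt hω.1), hω⟩
    have hle0 : ∫ ω in E n, (h ω - g ω) ∂ν ≤ 0 := by
      rw [integral_sub hint_h hint_g]
      linarith
    linarith
  have hT0 : ν T = 0 := by
    have hsub : T ⊆ ⋃ n, E n := by
      intro ω hω
      exact Set.mem_iUnion.mpr ⟨⌈W ω⌉₊, hω, show W ω ≤ ((⌈W ω⌉₊ : ℕ) : ℝ) from Nat.le_ceil _⟩
    exact measure_mono_null hsub (measure_iUnion_null hE0)
  show h ≤ᵐ[ν] g
  rw [Filter.EventuallyLE, ae_iff]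
  have : {ω | ¬ h ω ≤ g ω} = T := by
    ext ω
    simp [hT_def, not_le]
  rwa [this]
end

section
/- Inverse Binomial Lemma: let P_1,...,P_n be independent super-uniform random variables, c_1,...,c_n ≥ 0 deterministic constants with c_max = max_j c_j, and τ' ∈ (0,1). Then E[ 1 / ( c_max + Σ_{j≠i} c_j 1{P_j > τ'} ) ] ≤ 1 / ( (1−τ') Σ_j c_j ) for each i (assuming Σ_j c_j > 0). -/
open MeasureTheory ProbabilityTheory

lemma aux_cont_rpow {c : ℝ} (hc : 0 ≤ c) : Continuous fun t : ℝ => t ^ c :=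
  Real.continuous_rpow_const hc

lemma aux_rpow_sum {t : ℝ} (ht : 0 < t) {ι : Type*} (s : Finset ι) (f : ι → ℝ) :
    t ^ (∑ j ∈ s, f j) = ∏ j ∈ s, t ^ f j := by
  classical
  induction s using Finset.induction with
  | empty => simp
  | insert _ _ hj ih =>
    rw [Finset.sum_insert hj, Finset.prod_insert hj, Real.rpow_add ht, ih]

lemma aux_int_Ioc {r : ℝ} (hr : 0 < r) :
    ∫ t in Set.Ioc (0:ℝ) 1, t ^ (r - 1) = r⁻¹ := by
  rw [← intervalIntegral.integral_of_le (zero_le_one (α := ℝ))]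
  rw [integral_rpow (Or.inl (by linarith))]
  rw [sub_add_cancel, Real.one_rpow, Real.zero_rpow (ne_of_gt hr)]
  rw [sub_zero, one_div]

lemma aux_intInt {r : ℝ} (hr : -1 < r) {g : ℝ → ℝ} (hg : Continuous g) :
    IntervalIntegrable (fun t => t ^ r * g t) MeasureTheory.volume 0 1 :=
  (intervalIntegral.intervalIntegrable_rpow' hr).mul_continuousOn hg.continuousOn

lemma aux_intOn {r : ℝ} (hr : -1 < r) {g : ℝ → ℝ} (hg : Continuous g) :
    MeasureTheory.IntegrableOn (fun t => t ^ r * g t) (Set.Ioc 0 1) MeasureTheory.volume :=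
  (intervalIntegrable_iff_integrableOn_Ioc_of_le zero_le_one).mp (aux_intInt hr hg)

/-- **Inverse Binomial Lemma (weighted version; Ramdas–Barber–Wainwright–Jordan).**
Let `P 1, …, P n` be independent super-uniform random variables, `c j ≥ 0` deterministic
constants with maximum `c_max`, and `τ' ∈ (0,1)`. Then for each `i`,
`E[ 1 / (c_max + ∑_{j ≠ i} c j · 1{P j > τ'}) ] ≤ 1 / ((1 − τ') ∑_j c j)`. -/
theorem inverse_binomial_lemma
    {Ω : Type*} [MeasurableSpace Ω] (μ : Measure Ω) [IsProbabilityMeasure μ]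
    (n : ℕ) [NeZero n]
    (P : Fin n → Ω → ℝ) (hPmeas : ∀ j, Measurable (P j))
    (hindep : iIndepFun P μ)
    (hsuper : ∀ j, ∀ t ∈ Set.Icc (0 : ℝ) 1, μ {ω | P j ω ≤ t} ≤ ENNReal.ofReal t)
    (c : Fin n → ℝ) (hc : ∀ j, 0 ≤ c j) (hcsum : 0 < ∑ j, c j)
    (τ' : ℝ) (hτ' : τ' ∈ Set.Ioo (0 : ℝ) 1)
    (i : Fin n) :
    ∫ ω, (Finset.univ.sup' Finset.univ_nonempty c
        + ∑ j ∈ Finset.univ.erase i, c j * (if τ' < P j ω then 1 else 0))⁻¹ ∂μ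
      ≤ 1 / ((1 - τ') * ∑ j, c j) := by
  classical
  obtain ⟨hτ0, hτ1⟩ := hτ'
  set M := Finset.univ.sup' Finset.univ_nonempty c with hMdef
  set T : Finset (Fin n) := Finset.univ.erase i with hTdef
  set p : ℝ := 1 - τ' with hpdef
  have hp0 : 0 < p := by rw [hpdef]; linarith
  have hq0 : 0 ≤ τ' := le_of_lt hτ0
  have hcM : ∀ j, c j ≤ M := fun j => Finset.le_sup' c (Finset.mem_univ j)
  have hM0 : 0 < M := by
    obtain ⟨j, hj⟩ : ∃ j, 0 < c j := by
      by_contra h; push_neg at h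
      have : (∑ j, c j) ≤ 0 := Finset.sum_nonpos fun j _ => h j
      linarith
    exact lt_of_lt_of_le hj (hcM j)
  -- single-coordinate probabilities
  set pj : Fin n → ℝ := fun j => (μ {ω | τ' < P j ω}).toReal with hpjdef
  set qj : Fin n → ℝ := fun j => (μ {ω | P j ω ≤ τ'}).toReal with hqjdef
  have hEmeas : ∀ j, MeasurableSet {ω | P j ω ≤ τ'} :=
    fun j => measurableSet_le (hPmeas j) measurable_const
  have hcompl : ∀ j, {ω | τ' < P j ω} = {ω | P j ω ≤ τ'}ᶜ := by
    intro j; ext ω; simp [not_le]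
  have hsum1 : ∀ j, pj j + qj j = 1 := by
    intro j
    rw [hpjdef, hqjdef]
    simp only []
    rw [hcompl j, ← ENNReal.toReal_add (measure_ne_top μ _) (measure_ne_top μ _),
      add_comm, measure_add_measure_compl (hEmeas j), measure_univ, ENNReal.toReal_one]
  have hpj0 : ∀ j, 0 ≤ pj j := fun j => ENNReal.toReal_nonneg
  have hqj0 : ∀ j, 0 ≤ qj j := fun j => ENNReal.toReal_nonneg
  have hqj_le : ∀ j, qj j ≤ τ' := fun j =>
    ENNReal.toReal_le_of_le_ofReal hq0 (hsuper j τ' ⟨hq0, le_of_lt hτ1⟩)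
  have hpj_ge : ∀ j, p ≤ pj j := by
    intro j
    have := hsum1 j
    have := hqj_le j
    rw [hpdef]; linarith
  -- the partition sets
  set A : Finset (Fin n) → Set Ω :=
    fun S => {ω | Finset.filter (fun j => τ' < P j ω) T = S} with hAdef
  have hA_inter : ∀ S ∈ T.powerset,
      A S = ⋂ j ∈ T, P j ⁻¹' (if j ∈ S then Set.Ioi τ' else Set.Iic τ') := by
    intro S hS
    have hST : S ⊆ T := Finset.mem_powerset.mp hS
    ext ω
    simp only [hAdef, Set.mem_setOf_eq, Set.mem_iInter, Set.mem_preimage]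
    constructor
    · intro h j hjT
      by_cases hjS : j ∈ S
      · have : j ∈ T.filter fun j => τ' < P j ω := h ▸ hjS
        simpa [hjS] using (Finset.mem_filter.mp this).2
      · simp only [hjS, if_false, Set.mem_Iic]
        by_contra hlt
        push_neg at hlt
        exact hjS (h ▸ Finset.mem_filter.mpr ⟨hjT, hlt⟩)
    · intro h
      ext j
      simp only [Finset.mem_filter]
      constructor
      · rintro ⟨hjT, hjlt⟩
        by_contra hjS
        have := h j hjT
        simp only [hjS, if_false, Set.mem_Iic] at this
        linarith
      · intro hjS
        have hjT := hST hjS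
        have := h j hjT
        simp only [hjS, if_true, Set.mem_Ioi] at this
        exact ⟨hjT, this⟩
  have hAmeas : ∀ S ∈ T.powerset, MeasurableSet (A S) := by
    intro S hS
    rw [hA_inter S hS]
    refine Set.Finite.measurableSet_biInter (Finset.finite_toSet T) fun j _ => ?_
    by_cases h : j ∈ S <;>
      simp only [h, if_true, if_false] <;>
      exact (hPmeas j) (by measurability)
  -- Step 1 : expectation as a finite sum over configurations
  have hXdecomp : ∀ ω, (M + ∑ j ∈ T, c j * (if τ' < P j ω then 1 else 0))⁻¹
      = ∑ S ∈ T.powerset,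
          Set.indicator (A S) (fun _ => (M + ∑ j ∈ S, c j)⁻¹) ω := by
    intro ω
    have hmem : (T.filter fun j => τ' < P j ω) ∈ T.powerset :=
      Finset.mem_powerset.mpr (Finset.filter_subset _ _)
    rw [Finset.sum_eq_single_of_mem _ hmem (fun S hS hne => by
      refine Set.indicator_of_notMem (fun hmemA => hne ?_) _
      exact hmemA.symm)]
    rw [Set.indicator_of_mem (show ω ∈ A (T.filter fun j => τ' < P j ω) from rfl)]
    have hsf : ∑ j ∈ T, c j * (if τ' < P j ω then 1 else 0)
        = ∑ j ∈ T.filter (fun j => τ' < P j ω), c j := by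
      rw [Finset.sum_filter]
      refine Finset.sum_congr rfl fun j _ => ?_
      by_cases h : τ' < P j ω <;> simp [h]
    rw [hsf]
  have step1 : ∫ ω, (M + ∑ j ∈ T, c j * (if τ' < P j ω then 1 else 0))⁻¹ ∂μ
      = ∑ S ∈ T.powerset, (μ (A S)).toReal * (M + ∑ j ∈ S, c j)⁻¹ := by
    rw [integral_congr_ae (Filter.Eventually.of_forall hXdecomp)]
    rw [integral_finset_sum _ fun S hS => (integrable_const _).indicator (hAmeas S hS)]
    exact Finset.sum_congr rfl fun S hS => by
      rw [integral_indicator_const _ (hAmeas S hS), smul_eq_mul]; rfl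
  -- Step 2 : independence factorization
  have step2 : ∀ S ∈ T.powerset,
      (μ (A S)).toReal = (∏ j ∈ S, pj j) * ∏ j ∈ T \ S, qj j := by
    intro S hS
    have hST : S ⊆ T := Finset.mem_powerset.mp hS
    rw [hA_inter S hS,
      hindep.measure_inter_preimage_eq_mul T (fun j _ => by
        by_cases h : j ∈ S <;> simp [h, measurableSet_Ioi, measurableSet_Iic]),
      ENNReal.toReal_prod]
    have hterm : ∀ j ∈ T,
        (μ (P j ⁻¹' (if j ∈ S then Set.Ioi τ' else Set.Iic τ'))).toReal
          = if j ∈ S then pj j else qj j := by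
      intro j _
      by_cases h : j ∈ S
      · simp only [h, if_true, hpjdef]
        rfl
      · simp only [h, if_false, hqjdef]
        rfl
    rw [Finset.prod_congr rfl hterm, Finset.prod_ite]
    congr 1
    · apply Finset.prod_congr _ fun _ _ => rfl
      rw [Finset.filter_mem_eq_inter]
      exact Finset.inter_eq_right.mpr hST
    · apply Finset.prod_congr _ fun _ _ => rfl
      rw [Finset.sdiff_eq_filter]
  -- Step 3/4 : rewrite the sum as an integral over (0,1]
  have hM1 : (-1:ℝ) < M - 1 := by linarith
  have hpos : ∀ S : Finset (Fin n), (0:ℝ) < M + ∑ j ∈ S, c j := fun S =>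
    lt_of_lt_of_le hM0 (le_add_of_nonneg_right (Finset.sum_nonneg fun j _ => hc j))
  have step34 : ∑ S ∈ T.powerset, (μ (A S)).toReal * (M + ∑ j ∈ S, c j)⁻¹
      = ∫ t in Set.Ioc (0:ℝ) 1, t ^ (M - 1) * ∏ j ∈ T, (pj j * t ^ c j + qj j) := by
    have h1 : ∀ S ∈ T.powerset, (μ (A S)).toReal * (M + ∑ j ∈ S, c j)⁻¹
        = ∫ t in Set.Ioc (0:ℝ) 1,
            ((∏ j ∈ S, pj j) * ∏ j ∈ T \ S, qj j) * t ^ (M + (∑ j ∈ S, c j) - 1) := by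
      intro S hS
      rw [step2 S hS, ← aux_int_Ioc (hpos S), ← integral_const_mul]
    have hint2 : ∀ S ∈ T.powerset, Integrable
        (fun t => ((∏ j ∈ S, pj j) * ∏ j ∈ T \ S, qj j) * t ^ (M + (∑ j ∈ S, c j) - 1))
        (volume.restrict (Set.Ioc (0:ℝ) 1)) := by
      intro S _
      have hr : (-1:ℝ) < M + (∑ j ∈ S, c j) - 1 := by
        have := Finset.sum_nonneg (fun j (_ : j ∈ S) => hc j); linarith
      exact ((intervalIntegrable_iff_integrableOn_Ioc_of_le zero_le_one).mp
        (intervalIntegral.intervalIntegrable_rpow' hr)).const_mul _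
    calc ∑ S ∈ T.powerset, (μ (A S)).toReal * (M + ∑ j ∈ S, c j)⁻¹
        = ∑ S ∈ T.powerset, ∫ t in Set.Ioc (0:ℝ) 1,
            ((∏ j ∈ S, pj j) * ∏ j ∈ T \ S, qj j) * t ^ (M + (∑ j ∈ S, c j) - 1) :=
          Finset.sum_congr rfl h1
      _ = ∫ t in Set.Ioc (0:ℝ) 1, ∑ S ∈ T.powerset,
            ((∏ j ∈ S, pj j) * ∏ j ∈ T \ S, qj j) * t ^ (M + (∑ j ∈ S, c j) - 1) :=
          (integral_finset_sum _ hint2).symm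
      _ = ∫ t in Set.Ioc (0:ℝ) 1, t ^ (M - 1) * ∏ j ∈ T, (pj j * t ^ c j + qj j) := by
          refine setIntegral_congr_fun measurableSet_Ioc fun t ht => ?_
          have ht0 : 0 < t := ht.1
          rw [Finset.prod_add, Finset.mul_sum]
          refine Finset.sum_congr rfl fun S hS => ?_
          rw [Finset.prod_mul_distrib, ← aux_rpow_sum ht0,
            show M + (∑ j ∈ S, c j) - 1 = (M - 1) + ∑ j ∈ S, c j from by ring,
            Real.rpow_add ht0]
          ring
  -- Step 5 : replace individual probabilities by the uniform bound
  have hGp_cont : Continuous fun t : ℝ => ∏ j ∈ T, (p * t ^ c j + τ') :=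
    continuous_finset_prod _ fun j _ =>
      (continuous_const.mul (aux_cont_rpow (hc j))).add continuous_const
  have hGmix_cont : Continuous fun t : ℝ => ∏ j ∈ T, (pj j * t ^ c j + qj j) :=
    continuous_finset_prod _ fun j _ =>
      (continuous_const.mul (aux_cont_rpow (hc j))).add continuous_const
  have hfac_nn : ∀ (t : ℝ), 0 ≤ t → ∀ j, (0:ℝ) ≤ p * t ^ c j + τ' := fun t ht j =>
    add_nonneg (mul_nonneg hp0.le (Real.rpow_nonneg ht _)) hq0
  have step5 : ∫ t in Set.Ioc (0:ℝ) 1, t ^ (M - 1) * ∏ j ∈ T, (pj j * t ^ c j + qj j)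
      ≤ ∫ t in Set.Ioc (0:ℝ) 1, t ^ (M - 1) * ∏ j ∈ T, (p * t ^ c j + τ') := by
    refine setIntegral_mono_on (aux_intOn hM1 hGmix_cont) (aux_intOn hM1 hGp_cont)
      measurableSet_Ioc fun t ht => ?_
    refine mul_le_mul_of_nonneg_left ?_ (Real.rpow_nonneg ht.1.le _)
    refine Finset.prod_le_prod (fun j _ => add_nonneg
      (mul_nonneg (hpj0 j) (Real.rpow_nonneg ht.1.le _)) (hqj0 j)) fun j _ => ?_
    have hx1 : t ^ c j ≤ 1 := Real.rpow_le_one ht.1.le ht.2 (hc j)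
    have h := mul_le_mul_of_nonneg_right (hpj_ge j) (sub_nonneg.mpr hx1)
    nlinarith [hsum1 j, hpdef, h]
  -- Step 6 : FTC comparison
  set Φ : ℝ → ℝ := fun t => (p * t ^ M + τ') * ∏ j ∈ T, (p * t ^ c j + τ') with hΦdef
  set D : ℝ → ℝ := fun t => p * (M * t ^ (M - 1)) * ∏ j ∈ T, (p * t ^ c j + τ')
      + (p * t ^ M + τ') * ∑ j ∈ T,
          (∏ k ∈ T.erase j, (p * t ^ c k + τ')) * (p * (c j * t ^ (c j - 1))) with hDdef
  have hasD : ∀ t : ℝ, t ≠ 0 → HasDerivAt Φ (D t) t := by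
    intro t ht0
    have hf : HasDerivAt (fun t : ℝ => p * t ^ M + τ') (p * (M * t ^ (M - 1))) t :=
      (HasDerivAt.const_mul p (Real.hasDerivAt_rpow_const (Or.inl ht0))).add_const τ'
    have hg : ∀ j ∈ T, HasDerivAt (fun t : ℝ => p * t ^ c j + τ')
        (p * (c j * t ^ (c j - 1))) t := fun j _ =>
      (HasDerivAt.const_mul p (Real.hasDerivAt_rpow_const (Or.inl ht0))).add_const τ'
    have hprod := HasDerivAt.fun_finsetProd hg
    simpa [hΦdef, hDdef, smul_eq_mul] using hf.fun_mul hprod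
  have hΦcont : Continuous Φ :=
    ((continuous_const.mul (aux_cont_rpow hM0.le)).add continuous_const).mul hGp_cont
  have hDint : IntervalIntegrable D volume 0 1 := by
    rw [hDdef]
    apply IntervalIntegrable.add
    · have heq : (fun t : ℝ => p * (M * t ^ (M - 1)) * ∏ j ∈ T, (p * t ^ c j + τ'))
          = fun t => t ^ (M - 1) * (p * M * ∏ j ∈ T, (p * t ^ c j + τ')) := by
        funext t; ring
      rw [heq]
      exact aux_intInt hM1 (continuous_const.mul hGp_cont)
    · have heq : (fun t : ℝ => (p * t ^ M + τ') * ∑ j ∈ T,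
            (∏ k ∈ T.erase j, (p * t ^ c k + τ')) * (p * (c j * t ^ (c j - 1))))
          = fun t => ∑ j ∈ T, (p * t ^ M + τ') *
            ((∏ k ∈ T.erase j, (p * t ^ c k + τ')) * (p * (c j * t ^ (c j - 1)))) := by
        funext t; rw [Finset.mul_sum]
      rw [heq, ← Finset.sum_fn]
      refine IntervalIntegrable.sum _ fun j _ => ?_
      rcases eq_or_lt_of_le (hc j) with h0 | h0
      · have heq2 : (fun t : ℝ => (p * t ^ M + τ') *
            ((∏ k ∈ T.erase j, (p * t ^ c k + τ')) * (p * (c j * t ^ (c j - 1)))))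
            = fun _ => (0:ℝ) := by
          funext t; rw [← h0]; ring
        rw [heq2]; exact intervalIntegrable_const
      · have heq2 : (fun t : ℝ => (p * t ^ M + τ') *
            ((∏ k ∈ T.erase j, (p * t ^ c k + τ')) * (p * (c j * t ^ (c j - 1)))))
            = fun t => t ^ (c j - 1) * ((p * t ^ M + τ') *
              (∏ k ∈ T.erase j, (p * t ^ c k + τ')) * (p * c j)) := by
          funext t; ring
        rw [heq2]
        refine aux_intInt (by linarith) ?_
        exact (((continuous_const.mul (aux_cont_rpow hM0.le)).add continuous_const).mul
          (continuous_finset_prod _ fun k _ =>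
            (continuous_const.mul (aux_cont_rpow (hc k))).add continuous_const)).mul
          continuous_const
  have hFTC : ∫ t in (0:ℝ)..1, D t = Φ 1 - Φ 0 :=
    intervalIntegral.integral_eq_sub_of_hasDeriv_right_of_le zero_le_one hΦcont.continuousOn
      (fun x hx => (hasD x (ne_of_gt hx.1)).hasDerivWithinAt) hDint
  have hΦ1 : Φ 1 = 1 := by
    have h1 : ∀ x : ℝ, p * (1:ℝ) ^ x + τ' = 1 := fun x => by
      rw [Real.one_rpow, mul_one, hpdef]; ring
    simp only [hΦdef]
    rw [h1 M, Finset.prod_congr rfl fun j _ => h1 (c j), Finset.prod_const_one, one_mul]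
  have hΦ0 : 0 ≤ Φ 0 := by
    rw [hΦdef]
    exact mul_nonneg (add_nonneg (mul_nonneg hp0.le (Real.rpow_nonneg le_rfl _)) hq0)
      (Finset.prod_nonneg fun j _ => add_nonneg
        (mul_nonneg hp0.le (Real.rpow_nonneg le_rfl _)) hq0)
  have hC : ∑ j, c j = c i + ∑ j ∈ T, c j := by
    rw [hTdef]
    exact (Finset.add_sum_erase _ c (Finset.mem_univ i)).symm
  have step6 : (p * ∑ j, c j) * ∫ t in Set.Ioc (0:ℝ) 1,
      t ^ (M - 1) * ∏ j ∈ T, (p * t ^ c j + τ') ≤ 1 := by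
    have ptwise6 : ∀ t ∈ Set.Ioc (0:ℝ) 1,
        (p * ∑ j, c j) * (t ^ (M - 1) * ∏ j ∈ T, (p * t ^ c j + τ')) ≤ D t := by
      intro t ht
      obtain ⟨ht0, ht1⟩ := ht
      have hGnn : (0:ℝ) ≤ ∏ j ∈ T, (p * t ^ c j + τ') :=
        Finset.prod_nonneg fun j _ => hfac_nn t ht0.le j
      have hfirst : c i * (p * (t ^ (M - 1) * ∏ j ∈ T, (p * t ^ c j + τ')))
          ≤ p * (M * t ^ (M - 1)) * ∏ j ∈ T, (p * t ^ c j + τ') := by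
        have hXnn : (0:ℝ) ≤ p * (t ^ (M - 1) * ∏ j ∈ T, (p * t ^ c j + τ')) :=
          mul_nonneg hp0.le (mul_nonneg (Real.rpow_nonneg ht0.le _) hGnn)
        calc c i * (p * (t ^ (M - 1) * ∏ j ∈ T, (p * t ^ c j + τ')))
            ≤ M * (p * (t ^ (M - 1) * ∏ j ∈ T, (p * t ^ c j + τ'))) :=
              mul_le_mul_of_nonneg_right (hcM i) hXnn
          _ = p * (M * t ^ (M - 1)) * ∏ j ∈ T, (p * t ^ c j + τ') := by ring
      have hkey : ∀ j ∈ T, c j * (p * (t ^ (M - 1) * ∏ k ∈ T, (p * t ^ c k + τ')))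
          ≤ (p * t ^ M + τ') *
            ((∏ k ∈ T.erase j, (p * t ^ c k + τ')) * (p * (c j * t ^ (c j - 1)))) := by
        intro j hj
        have e1 : p * (t ^ (M - 1) * t ^ c j) = p * (t ^ M * t ^ (c j - 1)) := by
          rw [← Real.rpow_add ht0, ← Real.rpow_add ht0,
            show M - 1 + c j = M + (c j - 1) from by ring]
        have e2 : t ^ (M - 1) ≤ t ^ (c j - 1) :=
          Real.rpow_le_rpow_of_exponent_ge ht0 ht1 (by linarith [hcM j])
        have hkey2 : t ^ (M - 1) * (p * t ^ c j + τ') ≤ (p * t ^ M + τ') * t ^ (c j - 1) := by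
          have h3 := mul_le_mul_of_nonneg_left e2 hq0
          nlinarith [e1, h3]
        have hRnn : (0:ℝ) ≤ ∏ k ∈ T.erase j, (p * t ^ c k + τ') :=
          Finset.prod_nonneg fun k _ => hfac_nn t ht0.le k
        have hGsplit : ∏ k ∈ T, (p * t ^ c k + τ')
            = (p * t ^ c j + τ') * ∏ k ∈ T.erase j, (p * t ^ c k + τ') :=
          (Finset.mul_prod_erase T _ hj).symm
        calc c j * (p * (t ^ (M - 1) * ∏ k ∈ T, (p * t ^ c k + τ')))
            = (p * c j * ∏ k ∈ T.erase j, (p * t ^ c k + τ'))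
              * (t ^ (M - 1) * (p * t ^ c j + τ')) := by rw [hGsplit]; ring
          _ ≤ (p * c j * ∏ k ∈ T.erase j, (p * t ^ c k + τ'))
              * ((p * t ^ M + τ') * t ^ (c j - 1)) :=
              mul_le_mul_of_nonneg_left hkey2
                (mul_nonneg (mul_nonneg hp0.le (hc j)) hRnn)
          _ = (p * t ^ M + τ') *
              ((∏ k ∈ T.erase j, (p * t ^ c k + τ')) * (p * (c j * t ^ (c j - 1)))) := by
              ring
      calc (p * ∑ j, c j) * (t ^ (M - 1) * ∏ j ∈ T, (p * t ^ c j + τ'))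
          = c i * (p * (t ^ (M - 1) * ∏ j ∈ T, (p * t ^ c j + τ')))
            + ∑ j ∈ T, c j * (p * (t ^ (M - 1) * ∏ k ∈ T, (p * t ^ c k + τ'))) := by
            rw [hC, ← Finset.sum_mul]; ring
        _ ≤ p * (M * t ^ (M - 1)) * ∏ j ∈ T, (p * t ^ c j + τ')
            + ∑ j ∈ T, (p * t ^ M + τ') *
              ((∏ k ∈ T.erase j, (p * t ^ c k + τ')) * (p * (c j * t ^ (c j - 1)))) :=
            add_le_add hfirst (Finset.sum_le_sum hkey)
        _ = D t := by simp only [hDdef]; rw [Finset.mul_sum]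
    calc (p * ∑ j, c j) * ∫ t in Set.Ioc (0:ℝ) 1,
          t ^ (M - 1) * ∏ j ∈ T, (p * t ^ c j + τ')
        = ∫ t in Set.Ioc (0:ℝ) 1,
            (p * ∑ j, c j) * (t ^ (M - 1) * ∏ j ∈ T, (p * t ^ c j + τ')) :=
          (integral_const_mul _ _).symm
      _ ≤ ∫ t in Set.Ioc (0:ℝ) 1, D t :=
          setIntegral_mono_on ((aux_intOn hM1 hGp_cont).const_mul _)
            ((intervalIntegrable_iff_integrableOn_Ioc_of_le zero_le_one).mp hDint)
            measurableSet_Ioc ptwise6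
      _ = ∫ t in (0:ℝ)..1, D t := (intervalIntegral.integral_of_le zero_le_one).symm
      _ = Φ 1 - Φ 0 := hFTC
      _ ≤ 1 := by rw [hΦ1]; linarith
  -- assemble
  rw [step1, step34]
  have hpC : 0 < p * ∑ j, c j := mul_pos hp0 hcsum
  refine le_trans step5 ?_
  rw [le_div_iff₀ hpC]
  linarith [step6]
end
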